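/- For every n ≥ 2 one has f'_{2n+1} = f_{2n}·f'_{2n-1} and f_{2n+2} = f_{2n}·f'_{2n+1}. -/
import Mathlib


/-- The finite Fibonacci words over the alphabet {0,1}: f 1 = 1, f 2 = 0,
and f n = f (n-1) ++ f (n-2) for n ≥ 3. -/
def fibWord : ℕ → List ℕ
  | 0 => []
  | 1 => [1]
  | 2 => [0]
  | n + 3 => fibWord (n + 2) ++ fibWord (n + 1)

/-- The co-Fibonacci word f' n = f (n-2) ++ f (n-1), for n ≥ 3. -/
def coFibWord (n : ℕ) : List ℕ := fibWord (n - 2) ++ fibWord (n - 1)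

lemma fibWord_key (k : ℕ) :
    fibWord (k+3) ++ fibWord (k+4) = fibWord (k+4) ++ (fibWord (k+1) ++ fibWord (k+2)) := by
  have h3 : fibWord (k+3) = fibWord (k+2) ++ fibWord (k+1) := rfl
  have h4 : fibWord (k+4) = fibWord (k+3) ++ fibWord (k+2) := rfl
  rw [h4, h3]
  simp [List.append_assoc]

theorem stmt4 (n : ℕ) (hn : 2 ≤ n) :
    coFibWord (2 * n + 1) = fibWord (2 * n) ++ coFibWord (2 * n - 1) ∧
    fibWord (2 * n + 2) = fibWord (2 * n) ++ coFibWord (2 * n + 1) := by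
  obtain ⟨m, rfl⟩ : ∃ m, n = m + 2 := ⟨n - 2, by omega⟩
  have e1 : 2 * (m + 2) + 1 = 2 * m + 5 := by ring
  have e2 : 2 * (m + 2) = 2 * m + 4 := by ring
  rw [e1, e2]
  have e3 : 2 * m + 4 - 1 = 2 * m + 3 := by omega
  have e4 : 2 * m + 4 + 2 = 2 * m + 6 := by omega
  rw [e3, e4]
  constructor
  · show fibWord (2 * m + 5 - 2) ++ fibWord (2 * m + 5 - 1)
        = fibWord (2 * m + 4) ++ (fibWord (2 * m + 3 - 2) ++ fibWord (2 * m + 3 - 1))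
    have : 2 * m + 5 - 2 = 2 * m + 3 := by omega
    rw [this]
    have : 2 * m + 5 - 1 = 2 * m + 4 := by omega
    rw [this]
    have : 2 * m + 3 - 2 = 2 * m + 1 := by omega
    rw [this]
    have : 2 * m + 3 - 1 = 2 * m + 2 := by omega
    rw [this]
    exact fibWord_key (2 * m)
  · show fibWord (2 * m + 5) ++ fibWord (2 * m + 4)
        = fibWord (2 * m + 4) ++ (fibWord (2 * m + 5 - 2) ++ fibWord (2 * m + 5 - 1))
    have : 2 * m + 5 - 2 = 2 * m + 3 := by omega
    rw [this]
    have : 2 * m + 5 - 1 = 2 * m + 4 := by omega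
    rw [this]
    have h5 : fibWord (2 * m + 5) = fibWord (2 * m + 4) ++ fibWord (2 * m + 3) := rfl
    rw [h5, List.append_assoc]
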